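/- If G is a K_{2,r+1}-free graph with r ≥ 2, m ≥ 16r² edges, and no isolated vertices, then ρ(G) ≤ √m, with equality if and only if G is the star K_{1,m}. -/

import Mathlib

open Finset

/-- Real adjacency matrix of a simple graph. -/
noncomputable def adjMat {V : Type*} [Fintype V] (G : SimpleGraph V) : Matrix V V ℝ :=
  Matrix.of fun i j => haveI := Classical.dec (G.Adj i j); if G.Adj i j then (1 : ℝ) else 0

/-- `μ` is an eigenvalue of the adjacency matrix of `G`. -/
def IsAdjEigenvalue {V : Type*} [Fintype V] (G : SimpleGraph V) (μ : ℝ) : Prop :=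
  ∃ x : V → ℝ, x ≠ 0 ∧ (adjMat G).mulVec x = μ • x

/-- `ρ` is the spectral radius (largest adjacency eigenvalue) of `G`. -/
def IsSpecRad {V : Type*} [Fintype V] (G : SimpleGraph V) (ρ : ℝ) : Prop :=
  IsAdjEigenvalue G ρ ∧ ∀ μ : ℝ, IsAdjEigenvalue G μ → μ ≤ ρ

/-- `G` contains a copy of `F` as a subgraph. -/
def Contains {V W : Type*} (G : SimpleGraph V) (F : SimpleGraph W) : Prop :=
  ∃ f : W → V, Function.Injective f ∧ ∀ a b, F.Adj a b → G.Adj (f a) (f b)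

/-- `G` contains a cycle of length `t`. -/
def HasCycleLen {V : Type*} (G : SimpleGraph V) (t : ℕ) : Prop :=
  ∃ (v : V) (w : G.Walk v v), w.IsCycle ∧ w.length = t

set_option linter.unusedSectionVars false

section Aux

variable {V : Type*} [Fintype V] [DecidableEq V] {G : SimpleGraph V} [DecidableRel G.Adj]

lemma adjMat_apply' (i j : V) : adjMat G i j = if G.Adj i j then (1:ℝ) else 0 := by
  unfold adjMat
  by_cases h : G.Adj i j <;> simp [h]

lemma adjMat_mulVec (x : V → ℝ) (v : V) :
    (adjMat G).mulVec x v = ∑ w ∈ G.neighborFinset v, x w := by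
  simp only [Matrix.mulVec, dotProduct, adjMat_apply', ite_mul, one_mul, zero_mul,
    SimpleGraph.neighborFinset_eq_filter, Finset.sum_filter]

lemma common_le {r : ℕ}
    (hfree : ¬ Contains G (completeBipartiteGraph (Fin 2) (Fin (r + 1))))
    {u w : V} (huw : u ≠ w) :
    (G.neighborFinset u ∩ G.neighborFinset w).card ≤ r := by
  by_contra hcard
  push_neg at hcard
  obtain ⟨t, hts, htc⟩ := Finset.exists_subset_card_eq hcard
  have e : Fin (r+1) ≃ t := (t.equivFinOfCardEq htc).symm
  refine hfree ⟨Sum.elim (fun i => if i = 0 then u else w) (fun j => ((e j : t) : V)), ?_, ?_⟩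
  · have hmem : ∀ j : Fin (r+1), G.Adj u (e j) ∧ G.Adj w (e j) := by
      intro j
      have := hts (e j).2
      simp only [Finset.mem_inter, SimpleGraph.mem_neighborFinset] at this
      exact this
    rintro (i | i) (j | j) h
    · fin_cases i <;> fin_cases j <;> simp_all
    · exfalso
      by_cases hi : i = 0 <;> simp [hi] at h
      · exact (hmem j).1.ne h
      · exact (hmem j).2.ne h
    · exfalso
      by_cases hj : j = 0 <;> simp [hj] at h
      · exact (hmem i).1.ne h.symm
      · exact (hmem i).2.ne h.symm
    · exact congrArg Sum.inr (e.injective (Subtype.ext h))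
  · rintro (i | i) (j | j) h <;> simp [completeBipartiteGraph_adj] at h ⊢
    · have := hts (e j).2
      simp only [Finset.mem_inter, SimpleGraph.mem_neighborFinset] at this
      by_cases hi : i = 0 <;> simp [hi]
      exacts [this.1, this.2]
    · have := hts (e i).2
      simp only [Finset.mem_inter, SimpleGraph.mem_neighborFinset] at this
      by_cases hj : j = 0 <;> simp [hj]
      exacts [this.1.symm, this.2.symm]

lemma sum_swap_nbr (u : V) (f : V → ℕ) :
    ∑ v ∈ G.neighborFinset u, ∑ w ∈ (G.neighborFinset v).erase u, f w
      = ∑ w ∈ univ.erase u, (G.neighborFinset u ∩ G.neighborFinset w).card * f w := by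
  have h1 : ∀ v : V, ∑ w ∈ (G.neighborFinset v).erase u, f w
      = ∑ w ∈ univ.erase u, if w ∈ G.neighborFinset v then f w else 0 := by
    intro v
    rw [Finset.sum_ite_mem]
    congr 1
    ext w
    simp [mem_erase, and_comm]
  simp only [h1]
  rw [Finset.sum_comm]
  refine Finset.sum_congr rfl fun w hw => ?_
  have h2 : ∀ v : V, (w ∈ G.neighborFinset v) = (v ∈ G.neighborFinset w) := by
    intro v
    simp [SimpleGraph.mem_neighborFinset, G.adj_comm]
  simp only [h2]
  rw [Finset.sum_ite_mem, Finset.sum_const, smul_eq_mul]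

lemma sum_b_eq (u : V) :
    ∑ w ∈ univ.erase u, ((G.neighborFinset w).erase u).card + 2 * G.degree u
      = ∑ w : V, G.degree w := by
  have hbu : ((G.neighborFinset u).erase u).card = G.degree u := by
    rw [Finset.erase_eq_of_notMem (by simp)]
    rfl
  have h1 : ∑ w ∈ univ.erase u, ((G.neighborFinset w).erase u).card
        + ((G.neighborFinset u).erase u).card
      = ∑ w : V, ((G.neighborFinset w).erase u).card :=
    Finset.sum_erase_add univ _ (mem_univ u)
  have hpoint : ∀ w : V, ((G.neighborFinset w).erase u).card
      + (if u ∈ G.neighborFinset w then 1 else 0) = G.degree w := by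
    intro w
    by_cases h : u ∈ G.neighborFinset w
    · rw [if_pos h, Finset.card_erase_add_one h]; rfl
    · rw [if_neg h, Finset.erase_eq_of_notMem h, add_zero]; rfl
  have h2 : ∑ w : V, (((G.neighborFinset w).erase u).card
      + (if u ∈ G.neighborFinset w then 1 else 0)) = ∑ w : V, G.degree w :=
    Finset.sum_congr rfl fun w _ => hpoint w
  rw [Finset.sum_add_distrib] at h2
  have h3 : (∑ w : V, if u ∈ G.neighborFinset w then 1 else 0) = G.degree u := by
    rw [Finset.sum_boole]
    have : (filter (fun w => u ∈ G.neighborFinset w) univ) = G.neighborFinset u := by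
      ext w
      simp [SimpleGraph.mem_neighborFinset, G.adj_comm]
    rw [this]
    rfl
  rw [h3] at h2
  omega

end Aux

lemma eig_transfer {V W : Type*} [Fintype V] [Fintype W] {G : SimpleGraph V}
    {H : SimpleGraph W} (φ : G ≃g H) {μ : ℝ} (h : IsAdjEigenvalue H μ) :
    IsAdjEigenvalue G μ := by
  classical
  obtain ⟨x, hx0, hx⟩ := h
  refine ⟨x ∘ φ, ?_, ?_⟩
  · intro h0
    apply hx0
    funext w
    have := congrFun h0 (φ.symm w)
    simpa using this
  · funext v
    have key : (adjMat G).mulVec (x ∘ φ) v = (adjMat H).mulVec x (φ v) := by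
      simp only [Matrix.mulVec, dotProduct, adjMat_apply']
      refine Fintype.sum_equiv φ.toEquiv _ _ fun w => ?_
      simp [φ.map_adj_iff]
    rw [key, hx]
    simp

lemma star_eigen (m : ℕ) (hm : 0 < m) :
    IsAdjEigenvalue (completeBipartiteGraph (Fin 1) (Fin m)) (Real.sqrt m) := by
  classical
  have hm0 : (0:ℝ) < m := by exact_mod_cast hm
  refine ⟨Sum.elim (fun _ => Real.sqrt m) (fun _ => 1), ?_, ?_⟩
  · intro h0
    have := congrFun h0 (Sum.inl 0)
    simp only [Sum.elim_inl, Pi.zero_apply] at this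
    exact absurd this (ne_of_gt (Real.sqrt_pos.mpr hm0))
  · funext v
    simp only [Matrix.mulVec, dotProduct, adjMat_apply']
    cases v with
    | inl i =>
        rw [Fintype.sum_sum_type]
        simp [completeBipartiteGraph_adj, Real.mul_self_sqrt (le_of_lt hm0)]
    | inr j =>
        rw [Fintype.sum_sum_type]
        simp [completeBipartiteGraph_adj]

theorem stmt3 {V : Type*} [Fintype V] (G : SimpleGraph V) (r m : ℕ) (hr : 2 ≤ r)
    (hm : Nat.card G.edgeSet = m) (hm16 : 16 * r ^ 2 ≤ m)
    (hfree : ¬ Contains G (completeBipartiteGraph (Fin 2) (Fin (r + 1))))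
    (hiso : ∀ v : V, ∃ u, G.Adj v u)
    (ρ : ℝ) (hρ : IsSpecRad G ρ) :
    ρ ≤ Real.sqrt m ∧
      (ρ = Real.sqrt m ↔
        Nonempty (G ≃g completeBipartiteGraph (Fin 1) (Fin m))) := by
  classical
  have hm64 : 64 ≤ m := le_trans (by nlinarith) hm16
  have hm0 : 0 < m := by omega
  have hmE : G.edgeFinset.card = m := by
    rw [← hm, Nat.card_coe_set_eq, Set.ncard_eq_toFinset_card']
    exact congrArg Finset.card (by ext e; simp)
  have hsum : ∑ v : V, G.degree v = 2 * m := by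
    rw [G.sum_degrees_eq_twice_card_edges, hmE]
  have hdm : ∀ u : V, G.degree u ≤ m := by
    intro u
    rw [← hmE, ← G.card_incidenceFinset_eq_degree]
    exact Finset.card_le_card (by simp [SimpleGraph.incidenceFinset,
      SimpleGraph.incidenceSet_subset])
  obtain ⟨⟨x, hx0, hxe⟩, hmax⟩ := hρ
  obtain ⟨v₀, hv₀⟩ : ∃ v, x v ≠ 0 := by
    by_contra h
    push_neg at h
    exact hx0 (funext h)
  obtain ⟨u, -, hu⟩ := Finset.exists_max_image univ (fun w => |x w|) ⟨v₀, mem_univ v₀⟩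
  have hxu : x u ≠ 0 := by
    intro h
    have := hu v₀ (mem_univ v₀)
    rw [h, abs_zero] at this
    exact hv₀ (abs_eq_zero.mp (le_antisymm this (abs_nonneg _)))
  set y : V → ℝ := fun w => x w / x u with hy_def
  have hyu : y u = 1 := div_self hxu
  have hyb : ∀ w, |y w| ≤ 1 := by
    intro w
    rw [hy_def]
    rw [abs_div]
    exact div_le_one_of_le₀ (hu w (mem_univ w)) (abs_nonneg _)
  have hmv : ∀ v, ∑ w ∈ G.neighborFinset v, x w = ρ * x v := by
    intro v
    have := congrFun hxe v
    rw [adjMat_mulVec] at this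
    simpa using this
  have hyv : ∀ v, ∑ w ∈ G.neighborFinset v, y w = ρ * y v := by
    intro v
    simp only [hy_def]
    rw [← Finset.sum_div, hmv v]
    ring
  -- the key lemma
  have keyA : Real.sqrt m ≤ ρ → G.degree u = m ∧ ρ = Real.sqrt m := by
    intro hge
    have hsm8 : (8:ℝ) ≤ Real.sqrt m := by
      rw [show (8:ℝ) = Real.sqrt 64 by
        rw [show (64:ℝ) = 8^2 by norm_num, Real.sqrt_sq (by norm_num)]]
      exact Real.sqrt_le_sqrt (by exact_mod_cast hm64)
    have hρpos : 0 < ρ := lt_of_lt_of_le (by linarith) hge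
    have habs : ∀ w, |y w| ≤ (G.degree w : ℝ) / ρ := by
      intro w
      rw [le_div_iff₀ hρpos]
      have h1 : |ρ * y w| ≤ (G.degree w : ℝ) := by
        rw [← hyv w]
        calc |∑ v ∈ G.neighborFinset w, y v| ≤ ∑ v ∈ G.neighborFinset w, |y v| :=
              Finset.abs_sum_le_sum_abs _ _
          _ ≤ ∑ v ∈ G.neighborFinset w, 1 := Finset.sum_le_sum fun v _ => hyb v
          _ = (G.degree w : ℝ) := by
              rw [Finset.sum_const, nsmul_eq_mul, mul_one]
              norm_cast
      calc |y w| * ρ = |ρ * y w| := by rw [abs_mul, abs_of_pos hρpos, mul_comm]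
        _ ≤ _ := h1
    set S : ℕ := ∑ v ∈ G.neighborFinset u, ∑ w ∈ (G.neighborFinset v).erase u, G.degree w
      with hS_def
    have hScast : (S:ℝ) = ∑ v ∈ G.neighborFinset u,
        ∑ w ∈ (G.neighborFinset v).erase u, (G.degree w : ℝ) := by
      rw [hS_def]
      push_cast
      rfl
    have hkey : ρ * ρ ≤ (G.degree u : ℝ) + (S:ℝ) / ρ := by
      have h0 : ρ * ρ = ∑ v ∈ G.neighborFinset u, ρ * y v := by
        rw [← Finset.mul_sum, hyv u, hyu, mul_one]
      rw [h0]
      have hstep : ∀ v ∈ G.neighborFinset u, ρ * y v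
          ≤ 1 + (∑ w ∈ (G.neighborFinset v).erase u, (G.degree w : ℝ)) / ρ := by
        intro v hv
        have humem : u ∈ G.neighborFinset v := by
          rw [SimpleGraph.mem_neighborFinset] at hv ⊢
          exact hv.symm
        rw [← hyv v, ← Finset.add_sum_erase _ y humem, hyu, Finset.sum_div]
        gcongr with w hw
        exact le_trans (le_abs_self _) (habs w)
      calc ∑ v ∈ G.neighborFinset u, ρ * y v
          ≤ ∑ v ∈ G.neighborFinset u,
              (1 + (∑ w ∈ (G.neighborFinset v).erase u, (G.degree w : ℝ)) / ρ) :=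
            Finset.sum_le_sum hstep
        _ = (G.degree u : ℝ) + (S:ℝ) / ρ := by
            rw [Finset.sum_add_distrib, Finset.sum_const, nsmul_eq_mul, mul_one,
              ← Finset.sum_div, ← hScast]
            congr 1
    have hSle : S ≤ (2 + 2*r) * (m - G.degree u) := by
      rw [hS_def, sum_swap_nbr]
      have hpoint : ∀ w ∈ univ.erase u,
          (G.neighborFinset u ∩ G.neighborFinset w).card * G.degree w
            ≤ (1 + r) * ((G.neighborFinset w).erase u).card := by
        intro w hw
        have hwne : w ≠ u := (mem_erase.mp hw).1
        have hcr : (G.neighborFinset u ∩ G.neighborFinset w).card ≤ r :=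
          common_le hfree hwne.symm
        have hcb : (G.neighborFinset u ∩ G.neighborFinset w).card
            ≤ ((G.neighborFinset w).erase u).card := by
          apply Finset.card_le_card
          intro z hz
          rw [Finset.mem_inter, SimpleGraph.mem_neighborFinset,
            SimpleGraph.mem_neighborFinset] at hz
          rw [Finset.mem_erase, SimpleGraph.mem_neighborFinset]
          exact ⟨hz.1.ne', hz.2⟩
        have hdb : G.degree w ≤ ((G.neighborFinset w).erase u).card + 1 := by
          by_cases h : u ∈ G.neighborFinset w
          · rw [Finset.card_erase_add_one h]
            exact le_of_eq (G.card_neighborFinset_eq_degree w).symm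
          · rw [Finset.erase_eq_of_notMem h]
            exact Nat.le_succ_of_le (le_of_eq (G.card_neighborFinset_eq_degree w).symm)
        calc (G.neighborFinset u ∩ G.neighborFinset w).card * G.degree w
            ≤ (G.neighborFinset u ∩ G.neighborFinset w).card
                * (((G.neighborFinset w).erase u).card + 1) :=
              Nat.mul_le_mul_left _ hdb
          _ = (G.neighborFinset u ∩ G.neighborFinset w).card
                * ((G.neighborFinset w).erase u).card
                + (G.neighborFinset u ∩ G.neighborFinset w).card := by ring
          _ ≤ r * ((G.neighborFinset w).erase u).card
                + ((G.neighborFinset w).erase u).card :=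
              Nat.add_le_add (Nat.mul_le_mul_right _ hcr) hcb
          _ = (1 + r) * ((G.neighborFinset w).erase u).card := by ring
      calc ∑ w ∈ univ.erase u,
            (G.neighborFinset u ∩ G.neighborFinset w).card * G.degree w
          ≤ ∑ w ∈ univ.erase u, (1 + r) * ((G.neighborFinset w).erase u).card :=
            Finset.sum_le_sum hpoint
        _ = (1 + r) * ∑ w ∈ univ.erase u, ((G.neighborFinset w).erase u).card := by
            rw [Finset.mul_sum]
        _ ≤ (2 + 2*r) * (m - G.degree u) := by
            have hb := sum_b_eq (G := G) u
            rw [hsum] at hb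
            have h2 : ∑ w ∈ univ.erase u, ((G.neighborFinset w).erase u).card
                = 2 * (m - G.degree u) := by omega
            rw [h2]
            have : (1+r) * (2 * (m - G.degree u)) = (2 + 2*r) * (m - G.degree u) := by ring
            omega
    have h4r : (4:ℝ) * r ≤ Real.sqrt m := by
      rw [Real.le_sqrt (by positivity) (Nat.cast_nonneg m)]
      have : ((16 * r^2 : ℕ) : ℝ) ≤ (m:ℝ) := by exact_mod_cast hm16
      push_cast at this
      nlinarith
    have hrm : (m:ℝ) ≤ ρ * ρ := by
      nlinarith [Real.mul_self_sqrt (Nat.cast_nonneg m : (0:ℝ) ≤ m), Real.sqrt_nonneg (m:ℝ)]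
    have hkey' : (ρ * ρ - (G.degree u : ℝ)) * ρ ≤ (S:ℝ) := by
      rw [← le_div_iff₀ hρpos]
      linarith
    have hSr : (S:ℝ) ≤ (2 + 2*(r:ℝ)) * ((m:ℝ) - (G.degree u : ℝ)) := by
      have := (Nat.cast_le (α := ℝ)).mpr hSle
      push_cast [Nat.cast_sub (hdm u)] at this
      linarith
    have hr' : (2:ℝ) ≤ (r:ℝ) := by exact_mod_cast hr
    have hdu_eq : G.degree u = m := by
      by_contra hne
      have h1 : G.degree u < m := lt_of_le_of_ne (hdm u) hne
      have ht : (1:ℝ) ≤ (m:ℝ) - (G.degree u : ℝ) := by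
        have : ((G.degree u : ℕ) : ℝ) + 1 ≤ (m : ℝ) := by exact_mod_cast h1
        linarith
      have hρr : (2:ℝ) + 2*(r:ℝ) < ρ := by
        have h5 : (2:ℝ) + 2*r < 4*r := by linarith
        linarith [le_trans h4r hge]
      nlinarith [mul_le_mul_of_nonneg_right
        (sub_le_sub_right hrm ((G.degree u : ℝ))) hρpos.le,
        mul_pos (sub_pos.mpr hρr) (lt_of_lt_of_le one_pos ht)]
    have hS0 : S = 0 := by
      have := hSle
      rw [hdu_eq, Nat.sub_self, Nat.mul_zero] at this
      omega
    have hρ2 : ρ * ρ ≤ (m:ℝ) := by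
      rw [hS0] at hkey
      rw [hdu_eq] at hkey
      simpa using hkey
    have hle : ρ ≤ Real.sqrt m := by
      rw [Real.le_sqrt hρpos.le (Nat.cast_nonneg m), pow_two]
      exact hρ2
    exact ⟨hdu_eq, le_antisymm hle hge⟩
  have part1 : ρ ≤ Real.sqrt m := by
    by_cases h : Real.sqrt m ≤ ρ
    · exact (keyA h).2.le
    · linarith [not_le.mp h]
  refine ⟨part1, ?_, ?_⟩
  · -- forward
    intro heq
    have hdu : G.degree u = m := (keyA (le_of_eq heq.symm)).1
    have hincall : ∀ v w, G.Adj v w → v = u ∨ w = u := by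
      intro v w hvw
      have hsub : G.incidenceFinset u ⊆ G.edgeFinset := by
        simp [SimpleGraph.incidenceFinset, SimpleGraph.incidenceSet_subset]
      have hcardle : G.edgeFinset.card ≤ (G.incidenceFinset u).card := by
        rw [G.card_incidenceFinset_eq_degree, hdu, hmE]
      have heqf : G.incidenceFinset u = G.edgeFinset :=
        Finset.eq_of_subset_of_card_le hsub hcardle
      have hmem : s(v, w) ∈ G.incidenceFinset u := by
        rw [heqf, SimpleGraph.mem_edgeFinset]
        exact hvw
      rw [SimpleGraph.mem_incidenceFinset] at hmem
      have := hmem.2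
      rcases Sym2.mem_iff.mp this with h | h
      · exact Or.inl h.symm
      · exact Or.inr h.symm
    have hadj_u : ∀ v, v ≠ u → G.Adj u v := by
      intro v hv
      obtain ⟨z, hz⟩ := hiso v
      rcases hincall v z hz with h | h
      · exact absurd h hv
      · rw [h] at hz
        exact hz.symm
    have hnadj : ∀ v w, v ≠ u → w ≠ u → ¬ G.Adj v w := by
      intro v w hv hw h
      rcases hincall v w h with h' | h'
      · exact hv h'
      · exact hw h'
    have hNu : G.neighborFinset u = univ.erase u := by
      ext w
      rw [SimpleGraph.mem_neighborFinset, Finset.mem_erase]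
      constructor
      · intro h
        exact ⟨h.ne', mem_univ w⟩
      · intro h
        exact hadj_u w h.1
    have hcard2 : Fintype.card {v : V // ¬ v = u} = m := by
      rw [Fintype.card_subtype_compl, Fintype.card_subtype_eq]
      have hdeg : G.degree u = Fintype.card V - 1 := by
        have : G.degree u = (G.neighborFinset u).card := rfl
        rw [this, hNu, Finset.card_erase_of_mem (mem_univ u), Finset.card_univ]
      omega
    let e1 : {v : V // v = u} ≃ Fin 1 := Fintype.equivFinOfCardEq (Fintype.card_subtype_eq u)
    let e2 : {v : V // ¬ v = u} ≃ Fin m := Fintype.equivFinOfCardEq hcard2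
    let φ : V ≃ (Fin 1 ⊕ Fin m) :=
      (Equiv.sumCompl (· = u)).symm.trans (Equiv.sumCongr e1 e2)
    have hφpos : ∀ (a : V) (h : a = u), φ a = Sum.inl (e1 ⟨a, h⟩) := by
      intro a h
      show (Equiv.sumCongr e1 e2) ((Equiv.sumCompl (· = u)).symm a) = Sum.inl (e1 ⟨a, h⟩)
      rw [Equiv.sumCompl_symm_apply_of_pos (p := fun x => x = u) h]
      rfl
    have hφneg : ∀ (a : V) (h : ¬ a = u), φ a = Sum.inr (e2 ⟨a, h⟩) := by
      intro a h
      show (Equiv.sumCongr e1 e2) ((Equiv.sumCompl (· = u)).symm a) = Sum.inr (e2 ⟨a, h⟩)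
      rw [Equiv.sumCompl_symm_apply_of_neg (p := fun x => x = u) h]
      rfl
    refine ⟨⟨φ, ?_⟩⟩
    intro a b
    by_cases ha : a = u <;> by_cases hb : b = u
    · rw [hφpos a ha, hφpos b hb]
      subst ha; subst hb
      simp [completeBipartiteGraph_adj]
    · rw [hφpos a ha, hφneg b hb]
      subst ha
      simp [completeBipartiteGraph_adj]
      exact hadj_u b hb
    · rw [hφneg a ha, hφpos b hb]
      subst hb
      simp [completeBipartiteGraph_adj]
      exact (hadj_u a ha).symm
    · rw [hφneg a ha, hφneg b hb]
      simp [completeBipartiteGraph_adj]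
      exact hnadj a b ha hb
  · -- backward
    rintro ⟨φ⟩
    have h1 : IsAdjEigenvalue G (Real.sqrt m) := eig_transfer φ (star_eigen m hm0)
    have h2 := hmax _ h1
    exact le_antisymm part1 h2
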